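/- Let Q be a real quadratic form on R^(ℓ+1) with index j, and let L⁺ be the sum of the eigenspaces of its symmetric matrix corresponding to nonnegative eigenvalues. Then the unit sphere of L⁺, i.e. L⁺ ∩ S^ℓ, is a deformation retract of {y ∈ S^ℓ : Q(y) ≥ 0}. -/

import Mathlib

open scoped BigOperators

open scoped RealInnerProductSpace

set_option maxHeartbeats 1600000 in
/-- Let `Q(y) = ⟨M y, y⟩` be a quadratic form on `ℝ^(ℓ+1)` given by a
symmetric matrix `M`, and let `L⁺` be the sum of the eigenspaces of `M` corresponding to
nonnegative eigenvalues.  Then the unit sphere `L⁺ ∩ Sᶫ` of `L⁺` is a deformation retract of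
`S := {y ∈ Sᶫ : Q(y) ≥ 0}`: there is a retraction of `S` onto `L⁺ ∩ Sᶫ` fixing `L⁺ ∩ Sᶫ`
pointwise and homotopic to the identity. -/
theorem unit_sphere_of_nonneg_eigenspaces_deformation_retract (ℓ : ℕ)
    (M : Matrix (Fin (ℓ + 1)) (Fin (ℓ + 1)) ℝ) (hM : M.IsHermitian)
    (Q : EuclideanSpace ℝ (Fin (ℓ + 1)) → ℝ)
    (hQ : ∀ y, Q y = ∑ a, ∑ b, M a b * y a * y b)
    (Lplus : Submodule ℝ (EuclideanSpace ℝ (Fin (ℓ + 1))))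
    (hL : Lplus = ⨆ μ : {μ : ℝ // 0 ≤ μ},
      Module.End.eigenspace (Matrix.toEuclideanLin M) (μ : ℝ))
    (S : Set (EuclideanSpace ℝ (Fin (ℓ + 1))))
    (hS : S = {y | ‖y‖ = 1 ∧ 0 ≤ Q y}) :
    (∀ y ∈ Lplus, ‖y‖ = 1 → y ∈ S) ∧
    ∃ r : C(S, S),
      (∀ x : S, (x : EuclideanSpace ℝ (Fin (ℓ + 1))) ∈ Lplus → r x = x) ∧
      (∀ x : S, (r x : EuclideanSpace ℝ (Fin (ℓ + 1))) ∈ Lplus) ∧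
      Nonempty (r.Homotopy (ContinuousMap.id S)) := by
  classical
  set T : EuclideanSpace ℝ (Fin (ℓ + 1)) →ₗ[ℝ] EuclideanSpace ℝ (Fin (ℓ + 1)) :=
    Matrix.toEuclideanLin M with hT
  have hSym : T.IsSymmetric := Matrix.isHermitian_iff_isSymmetric.1 hM
  set b := hM.eigenvectorBasis with hb
  set μ := hM.eigenvalues with hμ
  have hTb : ∀ j, T (b j) = μ j • b j := by
    intro j; ext a; exact congrFun (hM.mulVec_eigenvectorBasis j) a
  -- Q as inner product
  have hQT : ∀ x : EuclideanSpace ℝ (Fin (ℓ + 1)), Q x = ⟪T x, x⟫ := by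
    intro x
    have hi : ⟪T x, x⟫ = ∑ a, (T x) a * x a := by
      simp [PiLp.inner_apply, RCLike.inner_apply, mul_comm]
    rw [hQ, hi]
    refine Finset.sum_congr rfl fun a _ => ?_
    have hTa : (T x) a = ∑ c, M a c * x c := rfl
    rw [hTa, Finset.sum_mul]
    exact Finset.sum_congr rfl fun c _ => by ring
  -- spectral representation of Q
  have hQrepr : ∀ x : EuclideanSpace ℝ (Fin (ℓ + 1)), Q x = ∑ i, μ i * ⟪b i, x⟫ ^ 2 := by
    intro x
    conv_lhs => rw [hQT x, ← b.sum_repr' x]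
    rw [map_sum, sum_inner]
    refine Finset.sum_congr rfl fun i _ => ?_
    rw [map_smul, hTb i, smul_smul, real_inner_smul_left, b.sum_repr' x]
    ring
  -- coefficients of Lplus vectors vanish at negative eigenvalues
  have hBneg : ∀ i, μ i < 0 → ∀ x ∈ Lplus, ⟪b i, x⟫ = 0 := by
    intro i hi x hx
    have hle : Lplus ≤ LinearMap.ker (innerₛₗ ℝ (b i)) := by
      rw [hL]
      refine iSup_le fun ν => fun z hz => ?_
      have hz' : T z = (ν : ℝ) • z := Module.End.mem_eigenspace_iff.1 hz
      have h1 : μ i * ⟪b i, z⟫ = (ν : ℝ) * ⟪b i, z⟫ := by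
        have h2 := hSym (b i) z
        rw [hTb i, hz', real_inner_smul_left, real_inner_smul_right] at h2
        exact h2
      have hne : μ i ≠ (ν : ℝ) := ne_of_lt (lt_of_lt_of_le hi ν.2)
      have h3 : (μ i - (ν : ℝ)) * ⟪b i, z⟫ = 0 := by ring_nf; linarith [h1]
      rcases mul_eq_zero.1 h3 with h | h
      · exact absurd (sub_eq_zero.1 h) hne
      · simpa [LinearMap.mem_ker] using h
    simpa [LinearMap.mem_ker] using hle hx
  -- basis vectors with nonneg eigenvalue are in Lplus
  have hbmem : ∀ i, 0 ≤ μ i → b i ∈ Lplus := by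
    intro i hi
    rw [hL]
    exact le_iSup (fun ν : {μ : ℝ // 0 ≤ μ} =>
        Module.End.eigenspace T (ν : ℝ)) ⟨μ i, hi⟩
      (Module.End.mem_eigenspace_iff.2 (hTb i))
  have hCpos : ∀ i, 0 ≤ μ i → ∀ x ∈ Lplusᗮ, ⟪b i, x⟫ = 0 := by
    intro i hi x hx
    exact hx (b i) (hbmem i hi)
  -- Q nonneg on Lplus
  have hF1 : ∀ x ∈ Lplus, 0 ≤ Q x := by
    intro x hx
    rw [hQrepr]
    refine Finset.sum_nonneg fun i _ => ?_
    rcases lt_or_ge (μ i) 0 with h | h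
    · rw [hBneg i h x hx]; simp
    · positivity
  -- Q nonpos on the orthogonal complement
  have hF2 : ∀ x ∈ Lplusᗮ, Q x ≤ 0 := by
    intro x hx
    rw [hQrepr]
    refine Finset.sum_nonpos fun i _ => ?_
    rcases lt_or_ge (μ i) 0 with h | h
    · exact mul_nonpos_of_nonpos_of_nonneg h.le (sq_nonneg _)
    · rw [hCpos i h x hx]; simp
  have hF2' : ∀ x ∈ Lplusᗮ, x ≠ 0 → Q x < 0 := by
    intro x hx hx0
    obtain ⟨i, hi⟩ : ∃ i, ⟪b i, x⟫ ≠ 0 := by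
      by_contra h
      push_neg at h
      apply hx0
      rw [← b.sum_repr' x]
      simp [h]
    have hμi : μ i < 0 := by
      by_contra h
      push_neg at h
      exact hi (hCpos i h x hx)
    rw [hQrepr]
    have hlt : ∑ j, μ j * ⟪b j, x⟫ ^ 2 < ∑ _j : Fin (ℓ + 1), (0 : ℝ) := by
      refine Finset.sum_lt_sum (fun j _ => ?_) ⟨i, Finset.mem_univ i, ?_⟩
      · rcases lt_or_ge (μ j) 0 with h | h
        · exact mul_nonpos_of_nonpos_of_nonneg h.le (sq_nonneg _)
        · rw [hCpos j h x hx]; simp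
      · exact mul_neg_of_neg_of_pos hμi (by positivity)
    simpa using hlt
  -- splitting
  have hF3 : ∀ u ∈ Lplus, ∀ v ∈ Lplusᗮ, Q (u + v) = Q u + Q v := by
    intro u hu v hv
    rw [hQrepr, hQrepr, hQrepr, ← Finset.sum_add_distrib]
    refine Finset.sum_congr rfl fun i _ => ?_
    rw [inner_add_right]
    rcases lt_or_ge (μ i) 0 with h | h
    · rw [hBneg i h u hu]; ring
    · rw [hCpos i h v hv]; ring
  have hQsmul : ∀ (c : ℝ) (x : EuclideanSpace ℝ (Fin (ℓ + 1))), Q (c • x) = c ^ 2 * Q x := by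
    intro c x
    rw [hQT, hQT, map_smul, real_inner_smul_left, real_inner_smul_right]
    ring
  have hSmem : ∀ x : S, ‖(x : EuclideanSpace ℝ (Fin (ℓ + 1)))‖ = 1
      ∧ 0 ≤ Q (x : EuclideanSpace ℝ (Fin (ℓ + 1))) := by
    intro x
    have h2 : (x : EuclideanSpace ℝ (Fin (ℓ + 1))) ∈ {y | ‖y‖ = 1 ∧ 0 ≤ Q y} := by
      rw [← hS]; exact x.2
    exact h2
  refine ⟨fun y hy hn => by rw [hS]; exact ⟨hn, hF1 y hy⟩, ?_⟩
  set P : EuclideanSpace ℝ (Fin (ℓ + 1)) →L[ℝ] Lplus := Lplus.orthogonalProjectionOnto with hP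
  -- orthogonal decomposition facts
  have hvmem : ∀ x : S, (x : EuclideanSpace ℝ (Fin (ℓ + 1)))
      - (P (x : EuclideanSpace ℝ (Fin (ℓ + 1))) : EuclideanSpace ℝ (Fin (ℓ + 1))) ∈ Lplusᗮ :=
    fun x => Lplus.sub_starProjection_mem_orthogonal (x : EuclideanSpace ℝ (Fin (ℓ + 1)))
  have hu_ne : ∀ x : S,
      (P (x : EuclideanSpace ℝ (Fin (ℓ + 1))) : EuclideanSpace ℝ (Fin (ℓ + 1))) ≠ 0 := by
    intro x hx0
    have hv := hvmem x
    rw [hx0, sub_zero] at hv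
    have hxne : (x : EuclideanSpace ℝ (Fin (ℓ + 1))) ≠ 0 := by
      intro h
      have h1 := (hSmem x).1
      rw [h] at h1
      simp at h1
    exact absurd (hSmem x).2 (not_le.2 (hF2' _ hv hxne))
  -- the straight-line family
  set g : ℝ → S → EuclideanSpace ℝ (Fin (ℓ + 1)) :=
    fun t x => (P (x : EuclideanSpace ℝ (Fin (ℓ + 1))) : EuclideanSpace ℝ (Fin (ℓ + 1)))
      + t • ((x : EuclideanSpace ℝ (Fin (ℓ + 1)))
        - (P (x : EuclideanSpace ℝ (Fin (ℓ + 1))) : EuclideanSpace ℝ (Fin (ℓ + 1)))) with hg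
  clear_value g
  have hg_ne : ∀ (t : ℝ) (x : S), g t x ≠ 0 := by
    intro t x h0
    rw [hg] at h0
    simp only at h0
    have htv : t • ((x : EuclideanSpace ℝ (Fin (ℓ + 1)))
        - (P (x : EuclideanSpace ℝ (Fin (ℓ + 1))) : EuclideanSpace ℝ (Fin (ℓ + 1)))) ∈ Lplusᗮ :=
      Submodule.smul_mem _ _ (hvmem x)
    have hu := eq_neg_of_add_eq_zero_left h0
    have huo : (P (x : EuclideanSpace ℝ (Fin (ℓ + 1))) : EuclideanSpace ℝ (Fin (ℓ + 1)))
        ∈ Lplusᗮ := by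
      rw [hu]; exact Submodule.neg_mem _ htv
    exact hu_ne x (inner_self_eq_zero.1
      (huo _ (P (x : EuclideanSpace ℝ (Fin (ℓ + 1)))).2))
  have hQg : ∀ (t : ℝ), t ^ 2 ≤ 1 → ∀ x : S, 0 ≤ Q (g t x) := by
    intro t ht x
    have hu : (P (x : EuclideanSpace ℝ (Fin (ℓ + 1))) : EuclideanSpace ℝ (Fin (ℓ + 1)))
        ∈ Lplus := (P (x : EuclideanSpace ℝ (Fin (ℓ + 1)))).2
    have hv := hvmem x
    have htv : t • ((x : EuclideanSpace ℝ (Fin (ℓ + 1)))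
        - (P (x : EuclideanSpace ℝ (Fin (ℓ + 1))) : EuclideanSpace ℝ (Fin (ℓ + 1)))) ∈ Lplusᗮ :=
      Submodule.smul_mem _ _ hv
    have h1 : Q (g t x)
        = Q (P (x : EuclideanSpace ℝ (Fin (ℓ + 1))) : EuclideanSpace ℝ (Fin (ℓ + 1)))
        + t ^ 2 * Q ((x : EuclideanSpace ℝ (Fin (ℓ + 1)))
          - (P (x : EuclideanSpace ℝ (Fin (ℓ + 1))) : EuclideanSpace ℝ (Fin (ℓ + 1)))) := by
      rw [hg]
      simp only
      rw [hF3 _ hu _ htv, hQsmul]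
    have h2 : Q (x : EuclideanSpace ℝ (Fin (ℓ + 1)))
        = Q (P (x : EuclideanSpace ℝ (Fin (ℓ + 1))) : EuclideanSpace ℝ (Fin (ℓ + 1)))
        + Q ((x : EuclideanSpace ℝ (Fin (ℓ + 1)))
          - (P (x : EuclideanSpace ℝ (Fin (ℓ + 1))) : EuclideanSpace ℝ (Fin (ℓ + 1)))) := by
      have hx : (x : EuclideanSpace ℝ (Fin (ℓ + 1)))
          = (P (x : EuclideanSpace ℝ (Fin (ℓ + 1))) : EuclideanSpace ℝ (Fin (ℓ + 1)))
          + ((x : EuclideanSpace ℝ (Fin (ℓ + 1)))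
            - (P (x : EuclideanSpace ℝ (Fin (ℓ + 1))) : EuclideanSpace ℝ (Fin (ℓ + 1)))) := by
        abel
      conv_lhs => rw [hx]
      exact hF3 _ hu _ hv
    have h3 : Q ((x : EuclideanSpace ℝ (Fin (ℓ + 1)))
        - (P (x : EuclideanSpace ℝ (Fin (ℓ + 1))) : EuclideanSpace ℝ (Fin (ℓ + 1)))) ≤ 0 :=
      hF2 _ hv
    have h5 := (hSmem x).2
    nlinarith
  -- normalized maps land in S
  have hmem : ∀ (t : ℝ), t ^ 2 ≤ 1 → ∀ x : S, ‖g t x‖⁻¹ • g t x ∈ S := by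
    intro t ht x
    have hne : ‖g t x‖ ≠ 0 := norm_ne_zero_iff.2 (hg_ne t x)
    have hmem' : ‖g t x‖⁻¹ • g t x ∈ {y : EuclideanSpace ℝ (Fin (ℓ + 1)) | ‖y‖ = 1 ∧ 0 ≤ Q y} := by
      constructor
      · rw [norm_smul, norm_inv, norm_norm, inv_mul_cancel₀ hne]
      · rw [hQsmul]
        have := hQg t ht x
        positivity
    rwa [← hS] at hmem'
  -- continuity
  have hPc : Continuous fun y : EuclideanSpace ℝ (Fin (ℓ + 1)) =>
      (P y : EuclideanSpace ℝ (Fin (ℓ + 1))) := continuous_subtype_val.comp P.continuous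
  have hgc : Continuous fun p : ℝ × S => g p.1 p.2 := by
    rw [hg]
    have hxc : Continuous fun p : ℝ × S => (p.2 : EuclideanSpace ℝ (Fin (ℓ + 1))) :=
      continuous_subtype_val.comp continuous_snd
    exact (hPc.comp hxc).add (continuous_fst.smul (hxc.sub (hPc.comp hxc)))
  have hNc : Continuous fun p : ℝ × S => ‖g p.1 p.2‖⁻¹ • g p.1 p.2 :=
    (hgc.norm.inv₀ fun p => norm_ne_zero_iff.2 (hg_ne p.1 p.2)).smul hgc
  have h0le : (0 : ℝ) ^ 2 ≤ 1 := by norm_num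
  refine ⟨⟨fun x => ⟨‖g 0 x‖⁻¹ • g 0 x, hmem 0 h0le x⟩, ?_⟩, ?_, ?_, ?_⟩
  · exact (hNc.comp (Continuous.prodMk_right (0 : ℝ))).subtype_mk _
  · intro x hx
    have hPx : (P (x : EuclideanSpace ℝ (Fin (ℓ + 1))) : EuclideanSpace ℝ (Fin (ℓ + 1)))
        = (x : EuclideanSpace ℝ (Fin (ℓ + 1))) := Submodule.starProjection_eq_self_iff.2 hx
    apply Subtype.ext
    show ‖g 0 x‖⁻¹ • g 0 x = (x : EuclideanSpace ℝ (Fin (ℓ + 1)))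
    have hg0 : g 0 x = (x : EuclideanSpace ℝ (Fin (ℓ + 1))) := by
      rw [hg]; simp only; rw [hPx]; simp
    rw [hg0, (hSmem x).1]
    simp
  · intro x
    show ‖g 0 x‖⁻¹ • g 0 x ∈ Lplus
    have hg0 : g 0 x
        = (P (x : EuclideanSpace ℝ (Fin (ℓ + 1))) : EuclideanSpace ℝ (Fin (ℓ + 1))) := by
      rw [hg]; simp
    rw [hg0]
    exact Submodule.smul_mem _ _ (P (x : EuclideanSpace ℝ (Fin (ℓ + 1)))).2
  · have hI : ∀ t : unitInterval, ((t : ℝ)) ^ 2 ≤ 1 := by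
      intro t
      have h1 := t.2.1
      have h2 := t.2.2
      nlinarith
    have hxc2 : Continuous fun p : unitInterval × S => (p.2 : EuclideanSpace ℝ (Fin (ℓ + 1))) :=
      continuous_subtype_val.comp continuous_snd
    have htc2 : Continuous fun p : unitInterval × S => (p.1 : ℝ) :=
      continuous_subtype_val.comp continuous_fst
    have hgc2 : Continuous fun p : unitInterval × S => g (p.1 : ℝ) p.2 := by
      simp only [hg]
      exact (hPc.comp hxc2).add (htc2.smul (hxc2.sub (hPc.comp hxc2)))
    have Hc : Continuous fun p : unitInterval × S =>
        ‖g (p.1 : ℝ) p.2‖⁻¹ • g (p.1 : ℝ) p.2 :=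
      (hgc2.norm.inv₀ fun p => norm_ne_zero_iff.2 (hg_ne (p.1 : ℝ) p.2)).smul hgc2
    have hg1' : ∀ x : S, ‖g 1 x‖⁻¹ • g 1 x = (x : EuclideanSpace ℝ (Fin (ℓ + 1))) := by
      intro x
      have hg1 : g 1 x = (x : EuclideanSpace ℝ (Fin (ℓ + 1))) := by
        rw [hg]; simp
      rw [hg1, (hSmem x).1]
      simp
    refine ⟨⟨⟨fun p => ⟨‖g (p.1 : ℝ) p.2‖⁻¹ • g (p.1 : ℝ) p.2, hmem _ (hI p.1) p.2⟩,
      Hc.subtype_mk _⟩, ?_, ?_⟩⟩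
    · intro x
      rfl
    · intro x
      exact Subtype.ext (hg1' x)
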